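/- arXiv:2004.00148 — 6 statements merged into one kernel-verified Lean document; each statement's English description precedes it below -/
import Mathlib

section
/- Let p ≥ 5 be odd, and define n_k = ((p-1)/2 · ⌊k/(p-3)⌋ + a_k) mod p + 1, where a_k is as defined. If n_k = n_{k'} and |a_{k'} - a_k| < p, then ⌊k'/(p-3)⌋ ≡ ⌊k/(p-3)⌋ + 2(a_{k'} - a_k) (mod p), provided 0 ≤ ⌊k/(p-3)⌋, ⌊k'/(p-3)⌋ ≤ p-1. -/
/-- Lemma 1: if n_k = n_{k'} then the petal-block indices satisfy
⌊k'/(p-3)⌋ ≡ ⌊k/(p-3)⌋ + 2(a_{k'} - a_k) (mod p). -/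
theorem block_index_congruence (p : ℕ) (hodd : Odd p) (hp : 5 ≤ p)
    (a : ℕ → ℕ)
    (ha : ∀ k, a k = if k % (p - 3) < (p - 3) / 2 then 0
      else (k % (p - 3)) - (p - 3) / 2 + 1)
    (n : ℕ → ℕ)
    (hn : ∀ k, n k = ((p - 1) / 2 * (k / (p - 3)) + a k) % p + 1)
    (k k' : ℕ) (hnk : n k = n k')
    (habs : |(a k' : ℤ) - (a k : ℤ)| < p)
    (hbk : k / (p - 3) ≤ p - 1) (hbk' : k' / (p - 3) ≤ p - 1) :
    ((k' / (p - 3) : ℕ) : ℤ) ≡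
      ((k / (p - 3) : ℕ) : ℤ) + 2 * ((a k' : ℤ) - (a k : ℤ)) [ZMOD (p : ℕ)] := by
  rw [hn k, hn k'] at hnk
  set b : ℕ := k / (p - 3) with hb
  set b' : ℕ := k' / (p - 3) with hb'
  have h1 : (((p - 1) / 2 * b + a k) : ℕ) ≡ ((p - 1) / 2 * b' + a k') [MOD p] :=
    Nat.add_right_cancel hnk
  have h2 : (((p - 1) / 2 * b + a k : ℕ) : ZMod p)
      = (((p - 1) / 2 * b' + a k' : ℕ) : ZMod p) :=
    (ZMod.natCast_eq_natCast_iff _ _ _).mpr h1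
  have hm1 : ((2 * ((p - 1) / 2) : ℕ) : ZMod p) = -1 := by
    have h2m : (2 * ((p - 1) / 2) : ℕ) = p - 1 := by
      obtain ⟨m, hm⟩ := hodd; omega
    rw [h2m, Nat.cast_sub (by omega), ZMod.natCast_self, Nat.cast_one]
    ring
  rw [← ZMod.intCast_eq_intCast_iff]
  push_cast at h2 hm1 ⊢
  linear_combination (2 : ZMod p) * h2 + ((b' : ZMod p) - (b : ZMod p)) * hm1
end

section
/- Let p ≥ 5 be odd. The unsigned Gauss code c : {0,...,p(p-3)-1} → {1,...,p(p-3)/2} given by c_k = p·L_k + n_k is exactly two-to-one: every value in {1,...,p(p-3)/2} is attained by exactly two indices k. -/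
private lemma divmod_unique (N x y x' y' : ℕ) (hN : 0 < N) (hy : y < N) (hy' : y' < N)
    (h : N * x + y = N * x' + y') : x = x' ∧ y = y' := by
  constructor
  · have h1 := congrArg (· / N) h
    simpa [Nat.mul_add_div hN, Nat.div_eq_of_lt hy, Nat.div_eq_of_lt hy'] using h1
  · have h1 := congrArg (· % N) h
    simpa [Nat.mul_add_mod, Nat.mod_eq_of_lt hy, Nat.mod_eq_of_lt hy'] using h1

/-- The inverse of `u+2` modulo `2u+5` is `2u+3`. -/
private lemma inv_eval (u v : ℕ) :
    ((u+2) * (((2*u+3) * v) % (2*u+5))) % (2*u+5) = v % (2*u+5) := by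
  rw [Nat.mul_mod_mod]
  have h : (u+2) * ((2*u+3) * v) = v + (2*u+5) * ((u+1) * v) := by ring
  rw [h, Nat.add_mul_mod_self_left]

private lemma mod_solve (u q v : ℕ) (hq : q < 2*u+5)
    (h : ((u+2)*q) % (2*u+5) = v % (2*u+5)) :
    q = ((2*u+3)*v) % (2*u+5) := by
  have key : (2*u+3) * ((u+2) * q) = q + (2*u+5) * ((u+1) * q) := by ring
  have h2 : ((2*u+3) * ((u+2)*q)) % (2*u+5) = ((2*u+3) * v) % (2*u+5) := by
    rw [← Nat.mul_mod_mod (2*u+3) ((u+2)*q), h, Nat.mul_mod_mod]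
  rwa [key, Nat.add_mul_mod_self_left, Nat.mod_eq_of_lt hq] at h2

/-- The petal unsigned Gauss code c_k = p·L_k + n_k is exactly two-to-one onto
{1, ..., p(p-3)/2}. -/
theorem gauss_code_two_to_one (p : ℕ) (hodd : Odd p) (hp : 5 ≤ p)
    (L : ℕ → ℕ) (hL : ∀ k, L k = min (k % (p - 3)) ((p - 4) - k % (p - 3)))
    (a : ℕ → ℕ)
    (ha : ∀ k, a k = if k % (p - 3) < (p - 3) / 2 then 0
      else (k % (p - 3)) - (p - 3) / 2 + 1)
    (n : ℕ → ℕ)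
    (hn : ∀ k, n k = ((p - 1) / 2 * (k / (p - 3)) + a k) % p + 1)
    (c : ℕ → ℕ) (hc : ∀ k, c k = p * L k + n k)
    (m : ℕ) (hm1 : 1 ≤ m) (hm2 : m ≤ p * (p - 3) / 2) :
    ((Finset.range (p * (p - 3))).filter (fun k => c k = m)).card = 2 := by
  obtain ⟨u, hu⟩ : ∃ u, p = 2*u+5 := by
    obtain ⟨t, ht⟩ := hodd; exact ⟨t-2, by omega⟩
  subst hu
  simp only [show 2*u+5-3 = 2*u+2 from by omega, show 2*u+5-4 = 2*u+1 from by omega,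
    show (2*u+2)/2 = u+1 from by omega, show (2*u+5-1)/2 = u+2 from by omega]
    at hL ha hn hm2 ⊢
  -- bound on m
  have hm2' : m ≤ (2*u+5) * (u+1) := by
    have key : (2*u+5) * (2*u+2) = ((2*u+5) * (u+1)) * 2 := by ring
    rwa [key, Nat.mul_div_cancel _ (by norm_num)] at hm2
  -- the target (level, position) pair
  obtain ⟨ℓ, ν, hν, hℓ, hmsplit⟩ :
      ∃ ℓ ν, ν < 2*u+5 ∧ ℓ ≤ u ∧ (2*u+5)*ℓ + ν = m - 1 := by
    refine ⟨(m-1)/(2*u+5), (m-1)%(2*u+5), Nat.mod_lt _ (by omega), ?_,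
      Nat.div_add_mod _ _⟩
    have h2 : (u+1)*(2*u+5) = (2*u+5)*(u+1) := by ring
    have h1 : (m-1)/(2*u+5) < u+1 := by
      rw [Nat.div_lt_iff_lt_mul (by omega)]; omega
    omega
  -- the two solutions
  obtain ⟨q₁, hq₁def⟩ : ∃ x, x = ((2*u+3) * ν) % (2*u+5) := ⟨_, rfl⟩
  obtain ⟨q₂, hq₂def⟩ : ∃ x, x = ((2*u+3) * (ν + (u+4+ℓ))) % (2*u+5) := ⟨_, rfl⟩
  have hq₁ : q₁ < 2*u+5 := by rw [hq₁def]; exact Nat.mod_lt _ (by omega)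
  have hq₂ : q₂ < 2*u+5 := by rw [hq₂def]; exact Nat.mod_lt _ (by omega)
  obtain ⟨k₁, hk₁def⟩ : ∃ x, x = (2*u+2) * q₁ + ℓ := ⟨_, rfl⟩
  obtain ⟨k₂, hk₂def⟩ : ∃ x, x = (2*u+2) * q₂ + (2*u+1-ℓ) := ⟨_, rfl⟩
  -- evaluation of the code at a general point
  have heval : ∀ q r, r < 2*u+2 →
      c ((2*u+2) * q + r) = (2*u+5) * min r (2*u+1-r)
        + (((u+2) * q + (if r < u+1 then 0 else r - (u+1) + 1)) % (2*u+5) + 1) := by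
    intro q r hr
    have hdiv : ((2*u+2) * q + r) / (2*u+2) = q := by
      rw [Nat.mul_add_div (by omega), Nat.div_eq_of_lt hr, Nat.add_zero]
    have hmod : ((2*u+2) * q + r) % (2*u+2) = r := by
      rw [Nat.mul_add_mod, Nat.mod_eq_of_lt hr]
    rw [hc, hL, hn, ha, hdiv, hmod]
  have hb : ∀ q, q < 2*u+5 → (2*u+2) * q + (2*u+1) < (2*u+5) * (2*u+2) := by
    intro q hq
    have h1 : (2*u+2) * (q+1) ≤ (2*u+2) * (2*u+5) := Nat.mul_le_mul_left _ (by omega)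
    have h2 : (2*u+2) * (2*u+5) = (2*u+5) * (2*u+2) := by ring
    have h3 : (2*u+2) * (q+1) = (2*u+2) * q + (2*u+2) := by ring
    omega
  -- the filter is exactly {k₁, k₂}
  have hset : (Finset.range ((2*u+5) * (2*u+2))).filter (fun k => c k = m)
      = {k₁, k₂} := by
    ext k
    simp only [Finset.mem_filter, Finset.mem_range, Finset.mem_insert,
      Finset.mem_singleton]
    constructor
    · rintro ⟨hk, hck⟩
      obtain ⟨q, hq⟩ : ∃ x, x = k / (2*u+2) := ⟨_, rfl⟩
      obtain ⟨r, hr⟩ : ∃ x, x = k % (2*u+2) := ⟨_, rfl⟩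
      have hrlt : r < 2*u+2 := by rw [hr]; exact Nat.mod_lt _ (by omega)
      have hqlt : q < 2*u+5 := by
        rw [hq, Nat.div_lt_iff_lt_mul (by omega)]; omega
      have hkqr : (2*u+2) * q + r = k := by
        rw [hq, hr]; exact Nat.div_add_mod k (2*u+2)
      rw [← hkqr, heval q r hrlt] at hck
      have hmod : ((u+2) * q + (if r < u+1 then 0 else r - (u+1) + 1)) % (2*u+5)
          < 2*u+5 := Nat.mod_lt _ (by omega)
      have hsplit : (2*u+5) * min r (2*u+1-r)
          + ((u+2) * q + (if r < u+1 then 0 else r - (u+1) + 1)) % (2*u+5)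
          = (2*u+5) * ℓ + ν := by omega
      obtain ⟨hLeq, hneq⟩ := divmod_unique (2*u+5) _ _ _ _ (by omega) hmod hν hsplit
      have hrcase : r = ℓ ∨ r = 2*u+1-ℓ := by omega
      rcases hrcase with hrℓ | hrℓ
      · -- case r = ℓ
        left
        rw [if_pos (by omega)] at hneq
        have hqval : q = q₁ := by
          rw [hq₁def]
          apply mod_solve u q ν hqlt
          rw [Nat.mod_eq_of_lt hν]
          simpa using hneq
        rw [hk₁def, ← hqval, ← hrℓ]
        omega
      · -- case r = 2u+1-ℓ
        right
        rw [if_neg (by omega)] at hneq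
        have hneq' : ((u+2) * q + (u+1-ℓ)) % (2*u+5) = ν := by
          have he : r - (u+1) + 1 = u+1-ℓ := by omega
          rwa [he] at hneq
        have hshift : ((u+2) * q) % (2*u+5) = (ν + (u+4+ℓ)) % (2*u+5) := by
          have h1 : ((u+2) * q + (u+1-ℓ) + (u+4+ℓ)) % (2*u+5)
              = (ν + (u+4+ℓ)) % (2*u+5) := by
            rw [Nat.add_mod, hneq', Nat.add_mod_mod]
          rwa [add_assoc, show (u+1-ℓ) + (u+4+ℓ) = 2*u+5 from by omega,
            Nat.add_mod_right] at h1
        have hqval : q = q₂ := by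
          rw [hq₂def]; exact mod_solve u q _ hqlt hshift
        rw [hk₂def, ← hqval, ← hrℓ]
        omega
    · have hmν : (2*u+5) * ℓ + (ν + 1) = m := by omega
      rintro (rfl | rfl)
      · refine ⟨by have := hb q₁ hq₁; omega, ?_⟩
        have hx : ((u+2) * q₁ + 0) % (2*u+5) = ν := by
          rw [add_zero, hq₁def, inv_eval, Nat.mod_eq_of_lt hν]
        rw [hk₁def, heval q₁ ℓ (by omega), if_pos (show ℓ < u+1 by omega),
          hx, show min ℓ (2*u+1-ℓ) = ℓ from by omega]
        exact hmν
      · refine ⟨by have := hb q₂ hq₂; omega, ?_⟩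
        rw [hk₂def, heval q₂ (2*u+1-ℓ) (by omega),
          if_neg (show ¬ (2*u+1-ℓ < u+1) by omega),
          show min (2*u+1-ℓ) (2*u+1-(2*u+1-ℓ)) = ℓ from by omega,
          show (2*u+1-ℓ) - (u+1) + 1 = u+1-ℓ from by omega]
        have h1 : ((u+2) * q₂) % (2*u+5) = (ν + (u+4+ℓ)) % (2*u+5) := by
          rw [hq₂def, inv_eval]
        have h2 : ((u+2) * q₂ + (u+1-ℓ)) % (2*u+5) = ν := by
          rw [Nat.add_mod, h1, Nat.mod_add_mod, Nat.add_mod_mod, add_assoc,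
            show (u+4+ℓ) + (u+1-ℓ) = 2*u+5 from by omega,
            Nat.add_mod_right, Nat.mod_eq_of_lt hν]
        rw [h2]
        exact hmν
  rw [hset]
  have hne : k₁ ≠ k₂ := by
    intro h
    have h1 : k₁ % (2*u+2) = ℓ := by
      rw [hk₁def, Nat.mul_add_mod, Nat.mod_eq_of_lt (by omega)]
    have h2 : k₂ % (2*u+2) = 2*u+1-ℓ := by
      rw [hk₂def, Nat.mul_add_mod, Nat.mod_eq_of_lt (by omega)]
    rw [h] at h1
    omega
  rw [Finset.card_insert_of_notMem (by simpa using hne), Finset.card_singleton]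
end

section
/- Let p ≥ 5 be odd and let k, k' be indices with k ≠ k' such that both L_k = L_{k'} and n_k = n_{k'} (i.e., c_k = c_{k'} in the unsigned Gauss code). Then (k mod (p-3)) + (k' mod (p-3)) = p - 4. -/
/-- Lemma 2: if k ≠ k' give the same crossing label (L_k = L_{k'} and
n_k = n_{k'}), then their remainders mod p-3 sum to p-4. -/
theorem remainders_sum (p : ℕ) (hodd : Odd p) (hp : 5 ≤ p)
    (L : ℕ → ℕ) (hL : ∀ k, L k = min (k % (p - 3)) ((p - 4) - k % (p - 3)))
    (a : ℕ → ℕ)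
    (ha : ∀ k, a k = if k % (p - 3) < (p - 3) / 2 then 0
      else (k % (p - 3)) - (p - 3) / 2 + 1)
    (n : ℕ → ℕ)
    (hn : ∀ k, n k = ((p - 1) / 2 * (k / (p - 3)) + a k) % p + 1)
    (k k' : ℕ) (hk : k < p * (p - 3)) (hk' : k' < p * (p - 3))
    (hne : k ≠ k') (hLeq : L k = L k') (hneq : n k = n k') :
    k % (p - 3) + k' % (p - 3) = p - 4 := by
  obtain ⟨t, ht⟩ := hodd
  have hm : 0 < p - 3 := by omega
  set m := p - 3 with hm_def
  have hr : k % m < m := Nat.mod_lt _ hm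
  have hr' : k' % m < m := Nat.mod_lt _ hm
  rw [hL k, hL k'] at hLeq
  -- from min equality: r = r' or r + r' = p - 4
  have hcases : k % m = k' % m ∨ k % m + k' % m = p - 4 := by omega
  rcases hcases with heq | hsum
  · -- contradiction case
    exfalso
    have haeq : a k = a k' := by rw [ha k, ha k', heq]
    rw [hn k, hn k', haeq] at hneq
    have hmodeq : ((p - 1) / 2 * (k / m) + a k') % p
        = ((p - 1) / 2 * (k' / m) + a k') % p := by omega
    have hModEq : Nat.ModEq p ((p - 1) / 2 * (k / m)) ((p - 1) / 2 * (k' / m)) :=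
      (Nat.ModEq.add_right_cancel' (a k') hmodeq)
    have hcop : Nat.Coprime ((p - 1) / 2) p := by
      have h1 : Nat.Coprime (p - 1) p := by
        have h2 : p - 1 + 1 = p := by omega
        rw [← h2]; simp
      exact Nat.Coprime.coprime_dvd_left ⟨2, by omega⟩ h1
    have hq : k / m ≡ k' / m [MOD p] := hModEq.cancel_left_of_coprime hcop.symm
    have hqlt : k / m < p := Nat.div_lt_of_lt_mul (by rw [Nat.mul_comm]; exact hk)
    have hqlt' : k' / m < p := Nat.div_lt_of_lt_mul (by rw [Nat.mul_comm]; exact hk')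
    have hqeq : k / m = k' / m := by
      have := hq
      unfold Nat.ModEq at this
      rwa [Nat.mod_eq_of_lt hqlt, Nat.mod_eq_of_lt hqlt'] at this
    apply hne
    have h1 := Nat.div_add_mod k m
    have h2 := Nat.div_add_mod k' m
    rw [hqeq, heq] at h1
    omega
  · exact hsum
end

section
/- Let M be an n × n integer matrix whose rows each sum to 0 and whose columns each sum to 0. Then all first minors of M obtained by deleting row i and column j have the same absolute value, up to sign determined by (-1)^{i+j}; in particular det M = 0 for n ≥ 2. -/
/-- If all row and column sums of an integer matrix vanish, all cofactors
(signed first minors) coincide; in particular det M = 0 for size ≥ 2. -/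
theorem cofactors_equal (n : ℕ) (M : Matrix (Fin (n + 1)) (Fin (n + 1)) ℤ)
    (hrow : ∀ i, ∑ j, M i j = 0) (hcol : ∀ j, ∑ i, M i j = 0) :
    (∀ i j i' j' : Fin (n + 1),
      (-1 : ℤ) ^ ((i : ℕ) + (j : ℕ)) *
        (M.submatrix i.succAbove j.succAbove).det =
      (-1 : ℤ) ^ ((i' : ℕ) + (j' : ℕ)) *
        (M.submatrix i'.succAbove j'.succAbove).det) ∧
    (1 ≤ n → M.det = 0) := by
  constructor
  · intro i j i' j'
    -- comparing minors obtained by deleting different rows (same column deleted)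
    have hrows : ∀ (j i i' : Fin (n + 1)),
        (M.submatrix i.succAbove j.succAbove).det =
          Int.negOnePow ((i : ℤ) - (i' : ℤ)) •
            (M.submatrix i'.succAbove j.succAbove).det := by
      intro j i i'
      have hsum : ∑ a, (M.submatrix id j.succAbove) a = 0 := by
        ext b
        erw [Finset.sum_apply]
        simpa using hcol (j.succAbove b)
      have h := Matrix.submatrix_succAbove_det_eq_negOnePow_submatrix_succAbove_det
        (M.submatrix id j.succAbove) hsum i i'
      simpa using h
    -- comparing minors obtained by deleting different columns (same row deleted)
    have hcols : ∀ (i j j' : Fin (n + 1)),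
        (M.submatrix i.succAbove j.succAbove).det =
          Int.negOnePow ((j : ℤ) - (j' : ℤ)) •
            (M.submatrix i.succAbove j'.succAbove).det := by
      intro i j j'
      have hsum : ∀ a, ∑ b, (M.submatrix i.succAbove id) a b = 0 := fun a =>
        hrow (i.succAbove a)
      have h := Matrix.submatrix_succAbove_det_eq_negOnePow_submatrix_succAbove_det'
        (M.submatrix i.succAbove id) hsum j j'
      simpa using h
    rw [hrows j i i', hcols i' j j']
    rw [smul_smul, Units.smul_def, smul_eq_mul, ← mul_assoc]
    congr 1
    rw [← Int.coe_negOnePow_natCast, ← Int.coe_negOnePow_natCast, ← Units.val_mul,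
      ← Int.negOnePow_add, ← Int.negOnePow_add]
    norm_cast
    rw [Int.negOnePow_eq_iff]
    push_cast
    exact ⟨(i : ℤ) + j - i' - j', by push_cast [Int.subNatNat_eq_coe]; ring⟩
  · intro _
    rw [← Matrix.exists_mulVec_eq_zero_iff]
    refine ⟨fun _ => 1, ?_, ?_⟩
    · intro h
      have := congr_fun h 0
      simp at this
    · ext i
      simpa [Matrix.mulVec, dotProduct] using hrow i
end

section
/- Let p be prime and M the ℤ-coloring matrix of a knot diagram with n crossings. The knot is p-colorable (the solution space of M·x ≡ 0 mod p has dimension at least 2 over Z/pZ) if and only if p divides the first minor of M (the knot determinant), assuming the first minor construction deletes one row and one column and the all-ones vector spans the trivial solutions. -/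
/-- A knot is p-colorable (mod-p kernel of the coloring matrix has dimension
at least 2) iff p divides the first minor (knot determinant). -/
theorem p_colorable_iff_dvd_det (p : ℕ) [Fact p.Prime] (n : ℕ)
    (M : Matrix (Fin (n + 2)) (Fin (n + 2)) ℤ)
    (hrow : ∀ i, ∑ j, M i j = 0) (hcol : ∀ j, ∑ i, M i j = 0) :
    2 ≤ Module.finrank (ZMod p)
        (LinearMap.ker (Matrix.toLin' (M.map (Int.cast : ℤ → ZMod p)))) ↔
    (p : ℤ) ∣ (M.submatrix Fin.succ Fin.succ).det := by
  set N : Matrix (Fin (n + 2)) (Fin (n + 2)) (ZMod p) := M.map Int.cast with hN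
  set N' : Matrix (Fin (n + 1)) (Fin (n + 1)) (ZMod p) := N.submatrix Fin.succ Fin.succ with hN'
  -- p ∣ D ↔ det N' = 0
  have hdet : ((p : ℤ) ∣ (M.submatrix Fin.succ Fin.succ).det) ↔ N'.det = 0 := by
    have hre : N' = (M.submatrix Fin.succ Fin.succ).map
        (Int.castRingHom (ZMod p)) := rfl
    rw [show N'.det = (((M.submatrix Fin.succ Fin.succ).det : ℤ) : ZMod p) by
      rw [hre, ← RingHom.mapMatrix_apply, ← RingHom.map_det]; simp]
    exact (ZMod.intCast_zmod_eq_zero_iff_dvd _ p).symm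
  rw [hdet]
  -- row sums of N are zero
  have hrowN : ∀ i, ∑ j, N i j = 0 := by
    intro i
    have : ((∑ j, M i j : ℤ) : (ZMod p)) = 0 := by rw [hrow i]; simp
    simpa [hN, Matrix.map_apply] using this
  have hcolN : ∀ j, ∑ i, N i j = 0 := by
    intro j
    have : ((∑ i, M i j : ℤ) : (ZMod p)) = 0 := by rw [hcol j]; simp
    simpa [hN, Matrix.map_apply] using this
  have ones_mem : N.mulVec (fun _ => (1 : (ZMod p))) = 0 := by
    funext i
    simp only [Matrix.mulVec, dotProduct, mul_one, Pi.zero_apply]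
    exact hrowN i
  constructor
  · -- dim ker ≥ 2 → det N' = 0
    intro h2
    -- find v in ker with v 0 = 0, v ≠ 0
    set S := LinearMap.ker (Matrix.toLin' N) with hS
    let φ : S →ₗ[ZMod p] (ZMod p) := (LinearMap.proj (0 : Fin (n+2))).comp S.subtype
    have hrn := LinearMap.finrank_range_add_finrank_ker φ
    have hr1 : Module.finrank (ZMod p) (LinearMap.range φ) ≤ 1 := by
      simpa using Submodule.finrank_le (LinearMap.range φ)
    have hker_pos : 0 < Module.finrank (ZMod p) (LinearMap.ker φ) := by omega
    haveI : Nontrivial (LinearMap.ker φ) := Module.finrank_pos_iff.mp hker_pos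
    obtain ⟨u, hu⟩ := exists_ne (0 : LinearMap.ker φ)
    have hu0 : (u : S) ≠ 0 := fun h => hu (Subtype.ext h)
    set v : Fin (n+2) → (ZMod p) := ((u : S) : Fin (n+2) → (ZMod p)) with hv
    have hv0 : v 0 = 0 := u.2
    have hvne : v ≠ 0 := fun h => hu0 (Subtype.ext h)
    have hvker : N.mulVec v = 0 := by
      have := (u : S).2
      rwa [LinearMap.mem_ker, Matrix.toLin'_apply] at this
    rw [← Matrix.exists_mulVec_eq_zero_iff]
    refine ⟨fun k => v k.succ, ?_, ?_⟩
    · intro h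
      apply hvne
      funext j
      refine Fin.cases hv0 (fun k => ?_) j
      exact congrFun h k
    · funext k
      have hk : ∑ j, N k.succ j * v j = 0 := congrFun hvker k.succ
      rw [Fin.sum_univ_succ, hv0, mul_zero, zero_add] at hk
      simpa [Matrix.mulVec, dotProduct, hN'] using hk
  · -- det N' = 0 → dim ker ≥ 2
    intro hdet0
    obtain ⟨w, hw, hww⟩ := (Matrix.exists_mulVec_eq_zero_iff).mpr hdet0
    set v : Fin (n+2) → (ZMod p) := Fin.cons 0 w with hv
    have hsucc : ∀ k : Fin (n+1), ∑ j, N k.succ j * v j = 0 := by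
      intro k
      rw [Fin.sum_univ_succ]
      simp only [hv, Fin.cons_zero, mul_zero, zero_add, Fin.cons_succ]
      simpa [Matrix.mulVec, dotProduct, hN'] using congrFun hww k
    have hvker : N.mulVec v = 0 := by
      funext i
      show ∑ j, N i j * v j = 0
      refine Fin.cases ?_ hsucc i
      have : ∑ k : Fin (n+1), ∑ j, N k.succ j * v j = 0 := by
        simp [hsucc]
      rw [Finset.sum_comm] at this
      have hcol' : ∀ j, N 0 j = -∑ k : Fin (n+1), N k.succ j := by
        intro j
        have := hcolN j
        rw [Fin.sum_univ_succ] at this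
        exact eq_neg_of_add_eq_zero_left this
      calc ∑ j, N 0 j * v j = ∑ j, (-∑ k : Fin (n+1), N k.succ j) * v j := by
            simp_rw [hcol']
        _ = -∑ j, ∑ k : Fin (n+1), N k.succ j * v j := by
            simp [Finset.sum_mul, Finset.sum_neg_distrib]
        _ = 0 := by rw [this]; ring
    have hvne : v ≠ 0 := by
      intro h
      apply hw
      funext k
      have := congrFun h k.succ
      simpa [hv] using this
    -- linear independence of ones and v
    have hli : LinearIndependent (ZMod p) ![fun _ => (1:ZMod p), v] := by
      rw [LinearIndependent.pair_iff]
      intro s t hst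
      have h0 := congrFun hst 0
      simp [hv] at h0
      subst h0
      have : t • v = 0 := by simpa using hst
      rcases smul_eq_zero.mp this with h | h
      · exact ⟨rfl, h⟩
      · exact absurd h hvne
    have hsub : Submodule.span (ZMod p) (Set.range ![fun _ => (1:ZMod p), v]) ≤
        LinearMap.ker (Matrix.toLin' N) := by
      rw [Submodule.span_le]
      rintro x hx
      simp only [Set.range, Matrix.range_cons, Matrix.range_empty] at hx
      rcases hx with ⟨i, rfl⟩
      fin_cases i
      · simp only [LinearMap.mem_ker, Matrix.toLin'_apply]
        exact ones_mem
      · simp only [LinearMap.mem_ker, Matrix.toLin'_apply]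
        exact hvker
    calc (2:ℕ) = Module.finrank (ZMod p) (Submodule.span (ZMod p) (Set.range ![fun _ => (1:ZMod p), v])) := by
          rw [finrank_span_eq_card hli]; simp
      _ ≤ _ := Submodule.finrank_mono hsub
end

section
/- Let p ≥ 5 be odd and define the unsigned Gauss code c_k = p·L_k + n_k for 0 ≤ k < p(p-3). For every k, the two occurrences k and k' of a crossing lie in different petal blocks: ⌊k/(p-3)⌋ ≠ ⌊k'/(p-3)⌋. -/
/-- The two occurrences of a crossing in the petal unsigned Gauss code lie in
different petal blocks. -/
theorem different_petal_blocks (p : ℕ) (hodd : Odd p) (hp : 5 ≤ p)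
    (L : ℕ → ℕ) (hL : ∀ k, L k = min (k % (p - 3)) ((p - 4) - k % (p - 3)))
    (a : ℕ → ℕ)
    (ha : ∀ k, a k = if k % (p - 3) < (p - 3) / 2 then 0
      else (k % (p - 3)) - (p - 3) / 2 + 1)
    (n : ℕ → ℕ)
    (hn : ∀ k, n k = ((p - 1) / 2 * (k / (p - 3)) + a k) % p + 1)
    (c : ℕ → ℕ) (hc : ∀ k, c k = p * L k + n k)
    (k k' : ℕ) (hk : k < p * (p - 3)) (hk' : k' < p * (p - 3))
    (hne : k ≠ k') (hceq : c k = c k') :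
    k / (p - 3) ≠ k' / (p - 3) := by
  intro heq
  obtain ⟨t, ht⟩ := hodd
  set m := (p - 3) / 2 with hm
  have hm2 : p - 3 = 2 * m := by omega
  have hm1 : 1 ≤ m := by omega
  have hp0 : 0 < p := by omega
  -- bounds on residues
  set r := k % (p - 3) with hr
  set r' := k' % (p - 3) with hr'
  have hrb : r < p - 3 := Nat.mod_lt _ (by omega)
  have hrb' : r' < p - 3 := Nat.mod_lt _ (by omega)
  -- bounds on a
  have hab : a k < p := by rw [ha k]; split_ifs <;> omega
  have hab' : a k' < p := by rw [ha k']; split_ifs <;> omega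
  -- n bounds
  have hnb : 1 ≤ n k ∧ n k ≤ p := by
    rw [hn k]
    constructor
    · omega
    · have := Nat.mod_lt ((p - 1) / 2 * (k / (p - 3)) + a k) hp0
      omega
  have hnb' : 1 ≤ n k' ∧ n k' ≤ p := by
    rw [hn k']
    constructor
    · omega
    · have := Nat.mod_lt ((p - 1) / 2 * (k' / (p - 3)) + a k') hp0
      omega
  -- from c equality, deduce L equal and n equal
  have hceq2 : p * L k + n k = p * L k' + n k' := by
    rw [← hc k, ← hc k', hceq]
  have hLnn : L k = L k' ∧ n k = n k' := by
    have h1 : p * L k + (n k - 1) = p * L k' + (n k' - 1) := by omega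
    have h2 : (p * L k + (n k - 1)) / p = L k := by
      rw [Nat.mul_add_div hp0, Nat.div_eq_of_lt (by omega)]; omega
    have h3 : (p * L k' + (n k' - 1)) / p = L k' := by
      rw [Nat.mul_add_div hp0, Nat.div_eq_of_lt (by omega)]; omega
    have hLL : L k = L k' := by rw [← h2, ← h3, h1]
    exact ⟨hLL, by
      have := hceq2
      rw [hLL] at this
      omega⟩
  obtain ⟨hLL, hnn⟩ := hLnn
  -- from n equal and same block, deduce a equal
  have haa : a k = a k' := by
    have h1 : ((p - 1) / 2 * (k / (p - 3)) + a k) % p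
        = ((p - 1) / 2 * (k' / (p - 3)) + a k') % p := by
      have := hnn
      rw [hn k, hn k'] at this
      omega
    rw [← heq] at h1
    have h2 : a k ≡ a k' [MOD p] :=
      Nat.ModEq.add_left_cancel' ((p - 1) / 2 * (k / (p - 3))) h1
    have h3 : a k % p = a k' % p := h2
    rw [Nat.mod_eq_of_lt hab, Nat.mod_eq_of_lt hab'] at h3
    exact h3
  -- from L equal and a equal, deduce residues equal
  have hLk : L k = min r ((p - 4) - r) := hL k
  have hLk' : L k' = min r' ((p - 4) - r') := hL k'
  have hak : a k = if r < m then 0 else r - m + 1 := ha k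
  have hak' : a k' = if r' < m then 0 else r' - m + 1 := ha k'
  have hrr : r = r' := by
    rcases lt_or_ge r m with h1 | h1 <;> rcases lt_or_ge r' m with h2 | h2 <;>
      simp [h1, h2, Nat.not_lt.mpr] at hak hak' <;> omega
  -- conclude k = k'
  apply hne
  have e1 := Nat.div_add_mod k (p - 3)
  have e2 := Nat.div_add_mod k' (p - 3)
  rw [← e1, ← e2, heq, ← hr, ← hr', hrr]
end
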